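/- Let V : (0,∞) → ℝ be positive and antitone (nonincreasing) with x ↦ x²·V(x) monotone (nondecreasing) on (0,∞). Then for all nonzero ζ, ξ ∈ ℂ, |V(|ζ|)·ζ − V(|ξ|)·ξ| ≤ ((|ζ|·V(|ζ|) + |ξ|·V(|ξ|))/(|ζ| + |ξ|)) · |ζ − ξ|; in particular |V(|ζ|)·ζ − V(|ξ|)·ξ| ≤ max(V(|ζ|), V(|ξ|)) · |ζ − ξ|. -/

import Mathlib

/-- Ellipticity estimate (3.9): if `V : (0,∞) → ℝ` is positive and nonincreasing with
`x ↦ x²·V x` nondecreasing on `(0,∞)`, then for all nonzero `ζ, ξ ∈ ℂ`,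
`|V(|ζ|)·ζ − V(|ξ|)·ξ| ≤ ((|ζ|·V(|ζ|) + |ξ|·V(|ξ|))/(|ζ| + |ξ|)) · |ζ − ξ|`;
in particular `|V(|ζ|)·ζ − V(|ξ|)·ξ| ≤ max (V(|ζ|)) (V(|ξ|)) · |ζ − ξ|`. -/
theorem ellipticity_estimate (V : ℝ → ℝ)
    (hpos : ∀ x ∈ Set.Ioi (0 : ℝ), 0 < V x)
    (hanti : AntitoneOn V (Set.Ioi 0))
    (hmono : MonotoneOn (fun x => x ^ 2 * V x) (Set.Ioi 0))
    (ζ ξ : ℂ) (hζ : ζ ≠ 0) (hξ : ξ ≠ 0) :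
    ‖V (‖ζ‖) • ζ - V (‖ξ‖) • ξ‖ ≤
      ((‖ζ‖ * V (‖ζ‖) + ‖ξ‖ * V (‖ξ‖)) /
        (‖ζ‖ + ‖ξ‖)) * ‖ζ - ξ‖ ∧
    ‖V (‖ζ‖) • ζ - V (‖ξ‖) • ξ‖ ≤
      max (V (‖ζ‖)) (V (‖ξ‖)) * ‖ζ - ξ‖ := by
  set a := ‖ζ‖ with ha_def
  set b := ‖ξ‖ with hb_def
  have ha : 0 < a := norm_pos_iff.mpr hζ
  have hb : 0 < b := norm_pos_iff.mpr hξ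
  set p := V a with hp_def
  set q := V b with hq_def
  have hp : 0 < p := hpos a ha
  have hq : 0 < q := hpos b hb
  set t := (ζ * (starRingEnd ℂ) ξ).re with ht_def
  have htab : |t| ≤ a * b := by
    calc |t| ≤ ‖ζ * (starRingEnd ℂ) ξ‖ := Complex.abs_re_le_norm _
      _ = a * b := by rw [norm_mul, Complex.norm_conj]
  have ht1 : -(a * b) ≤ t := neg_le_of_abs_le htab
  have ht2 : t ≤ a * b := le_of_abs_le htab
  have haz : a ^ 2 = ζ.re ^ 2 + ζ.im ^ 2 := by
    rw [ha_def, Complex.sq_norm, Complex.normSq_apply]; ring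
  have hbz : b ^ 2 = ξ.re ^ 2 + ξ.im ^ 2 := by
    rw [hb_def, Complex.sq_norm, Complex.normSq_apply]; ring
  have htt : t = ζ.re * ξ.re + ζ.im * ξ.im := by
    rw [ht_def, Complex.mul_re, Complex.conj_re, Complex.conj_im]; ring
  have h1 : ‖p • ζ - q • ξ‖ ^ 2
      = p ^ 2 * a ^ 2 + q ^ 2 * b ^ 2 - 2 * p * q * t := by
    rw [Complex.sq_norm, Complex.normSq_apply]
    simp only [Complex.sub_re, Complex.sub_im, Complex.smul_re, Complex.smul_im,
      smul_eq_mul]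
    linear_combination -(p ^ 2 * haz) - q ^ 2 * hbz + 2 * p * q * htt
  have h2 : ‖ζ - ξ‖ ^ 2 = a ^ 2 + b ^ 2 - 2 * t := by
    rw [Complex.sq_norm, Complex.normSq_apply]
    simp only [Complex.sub_re, Complex.sub_im]
    linear_combination -haz - hbz + 2 * htt
  -- the sign fact from the hypotheses
  have hs : 0 ≤ (q - p) * (a ^ 2 * p - b ^ 2 * q) := by
    rcases le_total a b with h | h
    · have hpq : q ≤ p := hanti ha hb h
      have hm : a ^ 2 * p ≤ b ^ 2 * q := hmono ha hb h
      nlinarith [mul_nonneg (show (0:ℝ) ≤ p - q by linarith) (show (0:ℝ) ≤ b ^ 2 * q - a ^ 2 * p by linarith)]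
    · have hpq : p ≤ q := hanti hb ha h
      have hm : b ^ 2 * q ≤ a ^ 2 * p := hmono hb ha h
      exact mul_nonneg (by linarith) (by linarith)
  have hab : 0 < a + b := by linarith
  have habsq : (0:ℝ) < (a + b) ^ 2 := by positivity
  have key : p ^ 2 * a ^ 2 + q ^ 2 * b ^ 2 - 2 * p * q * t
      ≤ (a * p + b * q) ^ 2 / (a + b) ^ 2 * (a ^ 2 + b ^ 2 - 2 * t) := by
    rw [div_mul_eq_mul_div, le_div_iff₀ habsq]
    have hd : (a * p + b * q) ^ 2 * (a ^ 2 + b ^ 2 - 2 * t)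
        - (p ^ 2 * a ^ 2 + q ^ 2 * b ^ 2 - 2 * p * q * t) * (a + b) ^ 2
        = 2 * (t + a * b) * ((q - p) * (a ^ 2 * p - b ^ 2 * q)) := by ring
    have := mul_nonneg (mul_nonneg (by norm_num : (0:ℝ) ≤ 2) (by linarith : (0:ℝ) ≤ t + a * b)) hs
    rw [mul_assoc] at this
    linarith
  have hM : 0 ≤ (a * p + b * q) / (a + b) := by positivity
  have hfirst : ‖p • ζ - q • ξ‖
      ≤ (a * p + b * q) / (a + b) * ‖ζ - ξ‖ := by
    have hsq : ‖p • ζ - q • ξ‖ ^ 2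
        ≤ ((a * p + b * q) / (a + b) * ‖ζ - ξ‖) ^ 2 := by
      rw [mul_pow, h1, h2, div_pow]
      exact key
    exact (pow_le_pow_iff_left₀ (norm_nonneg _)
      (mul_nonneg hM (norm_nonneg _)) two_ne_zero).mp hsq
  refine ⟨hfirst, hfirst.trans (mul_le_mul_of_nonneg_right ?_ (norm_nonneg _))⟩
  rw [div_le_iff₀ hab]
  have h1' := mul_le_mul_of_nonneg_left (le_max_left p q) ha.le
  have h2' := mul_le_mul_of_nonneg_left (le_max_right p q) hb.le
  nlinarith
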